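/- Let n, m ≥ 1, let M ∈ ℝ^{n×n}, let ṽ ∈ ℝⁿ be nonzero, λ̃ ∈ ℝ, let f₁,…,f_m ∈ ℝ and weights w₁,…,w_m ≥ 0 with Σᵢ₌₁ᵐ |fᵢ| wᵢ > 0, and set r = Mṽ − λ̃ṽ. Consider the set T_sym = { |ε| : ε ∈ ℝ and there exist symmetric E₁,…,E_m ∈ ℝ^{n×n} (Eᵢᵀ = Eᵢ) with ‖Eᵢ‖₂ ≤ wᵢ for all i such that (M + ε Σᵢ₌₁ᵐ fᵢ Eᵢ) ṽ = λ̃ ṽ }. Then the least element of T_sym is again ‖r‖ / ((Σᵢ₌₁ᵐ |fᵢ| wᵢ) ‖ṽ‖); i.e., restricting to symmetric perturbations measured in the spectral norm does not change the backward error, and the minimum is attained (e.g. by Eᵢ = −sign(fᵢ) wᵢ H with H the Householder reflector defined by r/‖r‖ − ṽ/‖ṽ‖, which satisfies Hṽ = (‖ṽ‖/‖r‖) r). -/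

import Mathlib

open Matrix

/-- Euclidean norm of a vector in `ℝⁿ`. -/
noncomputable def e2norm {n : ℕ} (v : Fin n → ℝ) : ℝ := Real.sqrt (∑ i, v i ^ 2)

/-- Frobenius norm of a real matrix. -/
noncomputable def frobNorm {n m : ℕ} (M : Matrix (Fin n) (Fin m) ℝ) : ℝ :=
  Real.sqrt (∑ i, ∑ j, M i j ^ 2)

/-- Spectral norm: the supremum of `‖M x‖` over Euclidean-unit vectors `x`. -/
noncomputable def specNorm {n m : ℕ} (M : Matrix (Fin n) (Fin m) ℝ) : ℝ :=
  sSup ((fun x => e2norm (M.mulVec x)) '' {x : Fin m → ℝ | e2norm x = 1})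

lemma e2norm_nonneg {n : ℕ} (v : Fin n → ℝ) : 0 ≤ e2norm v := Real.sqrt_nonneg _

lemma e2norm_sq {n : ℕ} (v : Fin n → ℝ) : e2norm v ^ 2 = ∑ i, v i ^ 2 :=
  Real.sq_sqrt (Finset.sum_nonneg fun i _ => sq_nonneg _)

lemma e2norm_zero {n : ℕ} : e2norm (0 : Fin n → ℝ) = 0 := by
  simp [e2norm]

lemma e2norm_smul {n : ℕ} (c : ℝ) (v : Fin n → ℝ) :
    e2norm (c • v) = |c| * e2norm v := by
  unfold e2norm
  rw [← Real.sqrt_sq_eq_abs, ← Real.sqrt_mul (sq_nonneg c), Finset.mul_sum]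
  congr 1
  exact Finset.sum_congr rfl fun i _ => by simp [Pi.smul_apply, smul_eq_mul, mul_pow]

lemma e2norm_pos {n : ℕ} {v : Fin n → ℝ} (hv : v ≠ 0) : 0 < e2norm v := by
  rcases Function.ne_iff.1 hv with ⟨i, hi⟩
  apply Real.sqrt_pos.2
  exact Finset.sum_pos' (fun j _ => sq_nonneg _) ⟨i, Finset.mem_univ i, sq_pos_iff.2 hi⟩

lemma e2norm_eq_zero {n : ℕ} {v : Fin n → ℝ} (h : e2norm v = 0) : v = 0 := by
  by_contra hv
  exact absurd h (ne_of_gt (e2norm_pos hv))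

lemma e2norm_eq_norm {n : ℕ} (v : Fin n → ℝ) :
    e2norm v = ‖(WithLp.equiv 2 (Fin n → ℝ)).symm v‖ := by
  rw [EuclideanSpace.norm_eq]
  simp [e2norm, Real.norm_eq_abs, sq_abs]

lemma e2norm_sum_le {n : ℕ} {ι : Type*} (s : Finset ι) (g : ι → (Fin n → ℝ)) :
    e2norm (∑ i ∈ s, g i) ≤ ∑ i ∈ s, e2norm (g i) := by
  simp only [e2norm_eq_norm]
  rw [show (WithLp.equiv 2 (Fin n → ℝ)).symm (∑ i ∈ s, g i)
      = ∑ i ∈ s, (WithLp.linearEquiv 2 ℝ (Fin n → ℝ)).symm (g i) from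
    map_sum (WithLp.linearEquiv 2 ℝ (Fin n → ℝ)).symm g s]
  exact norm_sum_le s _

lemma e2norm_mulVec_le_frob {n m : ℕ} (A : Matrix (Fin n) (Fin m) ℝ) {y : Fin m → ℝ}
    (hy : e2norm y = 1) : e2norm (A.mulVec y) ≤ frobNorm A := by
  have hy2 : ∑ j, y j ^ 2 = 1 := by
    have := e2norm_sq y; rw [hy] at this; linarith
  apply Real.sqrt_le_sqrt
  calc ∑ i, A.mulVec y i ^ 2 ≤ ∑ i, ∑ j, A i j ^ 2 := by
        apply Finset.sum_le_sum
        intro i _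
        calc (∑ j, A i j * y j) ^ 2 ≤ (∑ j, A i j ^ 2) * ∑ j, y j ^ 2 :=
              Finset.sum_mul_sq_le_sq_mul_sq _ _ _
          _ = ∑ j, A i j ^ 2 := by rw [hy2, mul_one]

lemma specNorm_bddAbove {n m : ℕ} (A : Matrix (Fin n) (Fin m) ℝ) :
    BddAbove ((fun x => e2norm (A.mulVec x)) '' {x : Fin m → ℝ | e2norm x = 1}) := by
  refine ⟨frobNorm A, ?_⟩
  rintro t ⟨x, hx, rfl⟩
  exact e2norm_mulVec_le_frob A hx

lemma e2norm_mulVec_le {n m : ℕ} (A : Matrix (Fin n) (Fin m) ℝ) (x : Fin m → ℝ) :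
    e2norm (A.mulVec x) ≤ specNorm A * e2norm x := by
  by_cases hx : x = 0
  · simp [hx, Matrix.mulVec_zero, e2norm_zero]
  · have hc : 0 < e2norm x := e2norm_pos hx
    set c := e2norm x with hcdef
    have hu : e2norm (c⁻¹ • x) = 1 := by
      rw [e2norm_smul, abs_of_pos (inv_pos.2 hc)]
      field_simp
      exact hcdef.symm
    have hxc : x = c • (c⁻¹ • x) := by
      rw [smul_smul, mul_inv_cancel₀ (ne_of_gt hc), one_smul]
    calc e2norm (A.mulVec x) = e2norm (c • A.mulVec (c⁻¹ • x)) := by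
          rw [← A.mulVec_smul, ← hxc]
      _ = c * e2norm (A.mulVec (c⁻¹ • x)) := by
          rw [e2norm_smul, abs_of_pos hc]
      _ ≤ c * specNorm A := by
          apply mul_le_mul_of_nonneg_left _ (le_of_lt hc)
          exact le_csSup (specNorm_bddAbove A) ⟨_, hu, rfl⟩
      _ = specNorm A * c := mul_comm _ _

lemma e2norm_single {n : ℕ} (hn : 1 ≤ n) :
    e2norm (Pi.single (⟨0, hn⟩ : Fin n) (1:ℝ)) = 1 := by
  unfold e2norm
  rw [Finset.sum_eq_single (⟨0, hn⟩ : Fin n)]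
  · simp
  · intro j _ hj; simp [Pi.single_apply, hj]
  · intro h; exact absurd (Finset.mem_univ _) h

lemma specNorm_smul_isometry {n : ℕ} (hn : 1 ≤ n) (k : ℝ) (H : Matrix (Fin n) (Fin n) ℝ)
    (hH : ∀ x, e2norm (H.mulVec x) = e2norm x) : specNorm (k • H) = |k| := by
  have himg : (fun x => e2norm ((k • H).mulVec x)) '' {x : Fin n → ℝ | e2norm x = 1}
      = {|k|} := by
    ext t
    constructor
    · rintro ⟨x, hx, rfl⟩
      simp only [Set.mem_singleton_iff]
      rw [show (k • H).mulVec x = k • H.mulVec x from Matrix.smul_mulVec k H x,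
        e2norm_smul, hH, hx, mul_one]
    · rintro rfl
      refine ⟨Pi.single ⟨0, hn⟩ 1, e2norm_single hn, ?_⟩
      show e2norm ((k • H).mulVec _) = |k|
      rw [show (k • H).mulVec _ = k • H.mulVec _ from Matrix.smul_mulVec k H _,
        e2norm_smul, hH, e2norm_single hn, mul_one]
  rw [specNorm, himg, csSup_singleton]

lemma sum_expand {n : ℕ} (x u : Fin n → ℝ) (t : ℝ) :
    ∑ i, (x i - t * u i) ^ 2
      = ∑ i, x i ^ 2 - 2 * t * (∑ j, u j * x j) + t ^ 2 * ∑ i, u i ^ 2 := by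
  rw [Finset.mul_sum, Finset.mul_sum, ← Finset.sum_sub_distrib, ← Finset.sum_add_distrib]
  exact Finset.sum_congr rfl fun i _ => by ring

lemma householder {n : ℕ} (a b : Fin n → ℝ) (ha : ∑ i, a i ^ 2 = 1)
    (hb : ∑ i, b i ^ 2 = 1) :
    ∃ H : Matrix (Fin n) (Fin n) ℝ, Hᵀ = H ∧
      (∀ x, e2norm (H.mulVec x) = e2norm x) ∧ H.mulVec b = a := by
  by_cases hab : a = b
  · exact ⟨1, Matrix.transpose_one, fun x => by rw [Matrix.one_mulVec],
      by rw [Matrix.one_mulVec, hab]⟩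
  · set u : Fin n → ℝ := a - b with hu
    set U : ℝ := ∑ i, u i ^ 2 with hUdef
    have hune : u ≠ 0 := sub_ne_zero.2 hab
    have hUpos : 0 < U := by
      rcases Function.ne_iff.1 hune with ⟨i, hi⟩
      exact Finset.sum_pos' (fun j _ => sq_nonneg _)
        ⟨i, Finset.mem_univ i, sq_pos_iff.2 hi⟩
    have hUne : U ≠ 0 := ne_of_gt hUpos
    set P : Matrix (Fin n) (Fin n) ℝ := Matrix.of (fun i j => u i * u j) with hP
    set H : Matrix (Fin n) (Fin n) ℝ := 1 - (2 / U) • P with hH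
    have hmul : ∀ x : Fin n → ℝ, ∀ i,
        H.mulVec x i = x i - (2 / U * ∑ j, u j * x j) * u i := by
      intro x i
      rw [hH, Matrix.sub_mulVec, Matrix.one_mulVec]
      have : ((2 / U) • P).mulVec x i = (2 / U * ∑ j, u j * x j) * u i := by
        rw [Matrix.smul_mulVec]
        show (2 / U) * P.mulVec x i = _
        rw [Matrix.mulVec, dotProduct]
        simp only [hP, Matrix.of_apply]
        rw [show ∑ j, u i * u j * x j = (∑ j, u j * x j) * u i by
          rw [Finset.sum_mul]; exact Finset.sum_congr rfl fun j _ => by ring]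
        ring
      rw [Pi.sub_apply, this]
    refine ⟨H, ?_, ?_, ?_⟩
    · rw [hH, Matrix.transpose_sub, Matrix.transpose_one, Matrix.transpose_smul]
      congr 1
      congr 1
      ext i j
      simp only [hP, Matrix.transpose_apply, Matrix.of_apply]
      ring
    · intro x
      unfold e2norm
      congr 1
      have : ∀ i, H.mulVec x i ^ 2 = (x i - (2 / U * ∑ j, u j * x j) * u i) ^ 2 :=
        fun i => by rw [hmul x i]
      rw [Finset.sum_congr rfl fun i _ => this i, sum_expand, ← hUdef]
      field_simp
      ring
    · have hdb : ∑ j, u j * b j = (∑ j, a j * b j) - 1 := by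
        rw [← hb, ← Finset.sum_sub_distrib]
        exact Finset.sum_congr rfl fun j _ => by
          simp only [hu, Pi.sub_apply]; ring
      have hU2 : U = 2 - 2 * ∑ j, a j * b j := by
        rw [hUdef, show ∑ i, u i ^ 2
            = ∑ i, a i ^ 2 - 2 * ∑ i, a i * b i + ∑ i, b i ^ 2 from ?_, ha, hb]
        · ring
        · rw [Finset.mul_sum, ← Finset.sum_sub_distrib, ← Finset.sum_add_distrib]
          exact Finset.sum_congr rfl fun i _ => by
            simp only [hu, Pi.sub_apply]; ring
      have hcoef : 2 / U * ∑ j, u j * b j = -1 := by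
        rw [hdb, hU2]
        have h2 : (2 : ℝ) - 2 * ∑ j, a j * b j ≠ 0 := by rw [← hU2]; exact hUne
        have h3 : (1 : ℝ) - ∑ j, a j * b j ≠ 0 := by intro h; apply h2; linarith
        field_simp
        ring
      ext i
      rw [hmul b i, hcoef]
      simp only [hu, Pi.sub_apply]
      ring

lemma e2norm_neg {n : ℕ} (v : Fin n → ℝ) : e2norm (-v) = e2norm v := by
  rw [show -v = (-1 : ℝ) • v by ext i; simp, e2norm_smul]
  simp

/-- restricting to symmetric perturbations measured in the
spectral norm does not change the backward error. -/
theorem symmetric_backward_error_spectral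
    {n m : ℕ} (hn : 1 ≤ n) (hm : 1 ≤ m)
    (M : Matrix (Fin n) (Fin n) ℝ)
    (v : Fin n → ℝ) (hv : v ≠ 0) (lam : ℝ)
    (f w : Fin m → ℝ) (hw : ∀ i, 0 ≤ w i)
    (hpos : 0 < ∑ i, |f i| * w i)
    (r : Fin n → ℝ) (hr : r = M.mulVec v - lam • v) :
    IsLeast
      {t : ℝ | ∃ ε : ℝ, ∃ E : Fin m → Matrix (Fin n) (Fin n) ℝ,
        (∀ i, (E i)ᵀ = E i) ∧
        (∀ i, specNorm (E i) ≤ w i) ∧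
        (M + ε • ∑ i, f i • E i).mulVec v = lam • v ∧ t = |ε|}
      (e2norm r / ((∑ i, |f i| * w i) * e2norm v)) := by
  set S : ℝ := ∑ i, |f i| * w i with hSdef
  have hvpos : 0 < e2norm v := e2norm_pos hv
  constructor
  · -- membership
    by_cases hr0 : r = 0
    · refine ⟨0, fun _ => 0, fun i => Matrix.transpose_zero, ?_, ?_, ?_⟩
      · intro i
        rw [show (0 : Matrix (Fin n) (Fin n) ℝ) = (0 : ℝ) • (1 : Matrix (Fin n) (Fin n) ℝ)
            from (zero_smul _ _).symm,
          specNorm_smul_isometry hn 0 1 (fun x => by rw [Matrix.one_mulVec]), abs_zero]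
        exact hw i
      · rw [zero_smul, add_zero]
        have : M.mulVec v - lam • v = 0 := by rw [← hr, hr0]
        exact sub_eq_zero.1 this
      · rw [hr0, e2norm_zero, zero_div, abs_zero]
    · have hrpos : 0 < e2norm r := e2norm_pos hr0
      set a : Fin n → ℝ := (e2norm r)⁻¹ • r with hadef
      set b : Fin n → ℝ := (e2norm v)⁻¹ • v with hbdef
      have hea : e2norm a = 1 := by
        rw [hadef, e2norm_smul, abs_of_pos (inv_pos.2 hrpos)]
        field_simp
      have heb : e2norm b = 1 := by
        rw [hbdef, e2norm_smul, abs_of_pos (inv_pos.2 hvpos)]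
        field_simp
      have ha : ∑ i, a i ^ 2 = 1 := by
        have := e2norm_sq a; rw [hea] at this; linarith
      have hb : ∑ i, b i ^ 2 = 1 := by
        have := e2norm_sq b; rw [heb] at this; linarith
      obtain ⟨H, hHsym, hHiso, hHb⟩ := householder a b ha hb
      set k : Fin m → ℝ := fun i => if 0 ≤ f i then -(w i) else w i with hkdef
      set ε : ℝ := e2norm r / (S * e2norm v) with hedef
      have hεpos : 0 < ε := div_pos hrpos (mul_pos hpos hvpos)
      refine ⟨ε, fun i => k i • H, ?_, ?_, ?_, (abs_of_pos hεpos).symm⟩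
      · intro i
        rw [Matrix.transpose_smul, hHsym]
      · intro i
        rw [specNorm_smul_isometry hn (k i) H hHiso, hkdef]
        by_cases h : 0 ≤ f i
        · simp only [if_pos h, abs_neg, abs_of_nonneg (hw i)]; exact le_refl _
        · simp only [if_neg h, abs_of_nonneg (hw i)]; exact le_refl _
      · have hsum : ∑ i, f i • (k i • H) = (-S) • H := by
          rw [Finset.sum_congr rfl fun (i : Fin m) _ =>
            (smul_smul (f i) (k i) H : f i • (k i • H) = (f i * k i) • H),
            ← Finset.sum_smul]
          congr 1
          rw [hSdef, ← Finset.sum_neg_distrib]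
          apply Finset.sum_congr rfl
          intro i _
          by_cases h : 0 ≤ f i
          · simp only [hkdef, if_pos h, abs_of_nonneg h]; ring
          · simp only [hkdef, if_neg h, abs_of_neg (lt_of_not_ge h)]; ring
        have hHv : H.mulVec v = (e2norm v * (e2norm r)⁻¹) • r := by
          have hv' : v = e2norm v • b := by
            rw [hbdef, smul_smul, mul_inv_cancel₀ (ne_of_gt hvpos), one_smul]
          conv_lhs => rw [hv']
          rw [Matrix.mulVec_smul, hHb, hadef, smul_smul]
        show (M + ε • ∑ i, f i • (k i • H)).mulVec v = lam • v
        rw [hsum, Matrix.add_mulVec, Matrix.smul_mulVec, Matrix.smul_mulVec,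
          hHv]
        have hcoef : ε • (-S : ℝ) • ((e2norm v * (e2norm r)⁻¹) • r) = -r := by
          rw [smul_smul, smul_smul, hedef]
          have hc : e2norm r / (S * e2norm v) * -S * (e2norm v * (e2norm r)⁻¹)
              = -1 := by
            field_simp
          rw [hc]
          ext i; simp
        rw [hcoef, hr]
        ext i
        simp only [Pi.add_apply, Pi.neg_apply, Pi.sub_apply, Pi.smul_apply, smul_eq_mul]
        ring
  · -- lower bound
    rintro t ⟨ε, E, hsym, hspec, heq, rfl⟩
    have key : ε • (∑ i, f i • E i).mulVec v = lam • v - M.mulVec v := by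
      rw [Matrix.add_mulVec, Matrix.smul_mulVec] at heq
      exact eq_sub_of_add_eq' heq
    have hnormr : e2norm r = |ε| * e2norm ((∑ i, f i • E i).mulVec v) := by
      rw [show r = -(ε • (∑ i, f i • E i).mulVec v) by rw [key, hr]; ext i; simp,
        e2norm_neg, e2norm_smul]
    have hbound : e2norm ((∑ i, f i • E i).mulVec v) ≤ S * e2norm v := by
      rw [show (∑ i, f i • E i).mulVec v = ∑ i, f i • (E i).mulVec v from ?_]
      · calc e2norm (∑ i, f i • (E i).mulVec v)
            ≤ ∑ i, e2norm (f i • (E i).mulVec v) := e2norm_sum_le _ _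
          _ ≤ ∑ i, |f i| * (w i * e2norm v) := by
              apply Finset.sum_le_sum
              intro i _
              rw [e2norm_smul]
              apply mul_le_mul_of_nonneg_left _ (abs_nonneg _)
              calc e2norm ((E i).mulVec v) ≤ specNorm (E i) * e2norm v :=
                    e2norm_mulVec_le (E i) v
                _ ≤ w i * e2norm v :=
                    mul_le_mul_of_nonneg_right (hspec i) (e2norm_nonneg v)
          _ = S * e2norm v := by
              rw [hSdef, Finset.sum_mul]
              exact Finset.sum_congr rfl fun i _ => (mul_assoc _ _ _).symm
      · rw [show (∑ i, f i • E i).mulVec v = ∑ i, (f i • E i).mulVec v from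
          map_sum (Matrix.mulVec.addMonoidHomLeft v) (fun i => f i • E i) Finset.univ]
        exact Finset.sum_congr rfl fun i _ => Matrix.smul_mulVec (f i) (E i) v
    rw [div_le_iff₀ (mul_pos hpos hvpos)]
    calc e2norm r = |ε| * e2norm ((∑ i, f i • E i).mulVec v) := hnormr
      _ ≤ |ε| * (S * e2norm v) :=
          mul_le_mul_of_nonneg_left hbound (abs_nonneg ε)
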